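/- arXiv:hep-th/9712002 — 5 statements merged into one kernel-verified Lean document; each statement's English description precedes it below -/
import Mathlib

section
/- Let a ∈ ℝ^{n+1}, let H̃ be the (n+2)×(n+2) antisymmetric matrix with H̃_{0j} = -a_j, H̃_{j0} = a_j (1 ≤ j ≤ n+1) and zeros elsewhere, and let η = diag(-1,1,...,1). Then -det(η + i H̃) = 1 + |a|^2. -/
/-- The matrix `H̃` with `H̃_{0j} = -a_j`, `H̃_{j0} = a_j` (`1 ≤ j ≤ n+1`) and zeros elsewhere. -/
def Htilde (n : ℕ) (a : Fin (n + 1) → ℝ) : Matrix (Fin (n + 2)) (Fin (n + 2)) ℝ :=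
  Matrix.of fun i j =>
    if (i : ℕ) = 0 then
      if hj : (j : ℕ) = 0 then 0 else -a ⟨(j : ℕ) - 1, by have := j.isLt; omega⟩
    else if (j : ℕ) = 0 then
      if hi : (i : ℕ) = 0 then 0 else a ⟨(i : ℕ) - 1, by have := i.isLt; omega⟩
    else 0

/-- The Minkowski metric `η = diag(-1, 1, …, 1)`. -/
def eta (n : ℕ) : Matrix (Fin (n + 2)) (Fin (n + 2)) ℝ :=
  Matrix.diagonal fun i => if (i : ℕ) = 0 then -1 else 1

/-- The equivalence `Unit ⊕ Fin (n+1) ≃ Fin (n+2)` splitting off the first index. -/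
def blockEquiv (n : ℕ) : Unit ⊕ Fin (n + 1) ≃ Fin (n + 2) where
  toFun := Sum.elim (fun _ => 0) Fin.succ
  invFun i := Fin.cases (Sum.inl ()) Sum.inr i
  left_inv := by rintro (⟨⟩ | j) <;> simp
  right_inv i := by cases i using Fin.cases <;> simp

/-- `-det(η + i H̃) = 1 + |a|^2`. -/
theorem det_eta_add_I_Htilde (n : ℕ) (a : Fin (n + 1) → ℝ) :
    -Matrix.det
        ((eta n).map (fun x : ℝ => (x : ℂ)) +
          Complex.I • (Htilde n a).map (fun x : ℝ => (x : ℂ)))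
      = ((1 + ∑ j, a j ^ 2 : ℝ) : ℂ) := by
  set M : Matrix (Fin (n + 2)) (Fin (n + 2)) ℂ :=
    (eta n).map (fun x : ℝ => (x : ℂ)) +
      Complex.I • (Htilde n a).map (fun x : ℝ => (x : ℂ)) with hM
  have hsub : M.submatrix (blockEquiv n) (blockEquiv n) =
      Matrix.fromBlocks (Matrix.of fun _ _ => (-1 : ℂ))
        (Matrix.of fun (_ : Unit) j => -(Complex.I * a j))
        (Matrix.of fun i (_ : Unit) => Complex.I * a i) 1 := by
    ext i j
    rcases i with ⟨⟩ | i <;> rcases j with ⟨⟩ | j <;>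
      simp [hM, blockEquiv, eta, Htilde, Matrix.fromBlocks, Matrix.diagonal,
        Matrix.one_apply, Fin.succ_ne_zero, (Fin.succ_ne_zero _).symm, mul_comm]
    split_ifs <;> simp
  have hdet := Matrix.det_submatrix_equiv_self (blockEquiv n) M
  rw [hsub] at hdet
  rw [← hdet, Matrix.det_fromBlocks_one₂₂]
  rw [Matrix.det_unique]
  simp only [Matrix.sub_apply, Matrix.mul_apply, Matrix.of_apply]
  push_cast
  have : ∀ j : Fin (n+1), -(Complex.I * (a j : ℂ)) * (Complex.I * a j) = (a j : ℂ)^2 := by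
    intro j
    ring_nf
    rw [Complex.I_sq]
    ring
  simp only [this]
  ring
end

section
/- Let a, b > 0 and n ≥ 1. Then ∫_0^1 2^n t^{n-1} / (a + t^2 b)^n dt = (1/(ab)^{n/2}) ∫_0^∞ cosh^{-n}(s − α) ds, where α = (1/2) log(b/a). -/
open MeasureTheory Real

/-- `∫₀¹ 2ⁿ tⁿ⁻¹/(a+t²b)ⁿ dt = (ab)^{-n/2} ∫₀^∞ cosh⁻ⁿ(s−α) ds` with `α = ½ log(b/a)`. -/
theorem integral_substitution (n : ℕ) (hn : 1 ≤ n) (a b : ℝ) (ha : 0 < a) (hb : 0 < b) :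
    ∫ t in (0 : ℝ)..1, 2 ^ n * t ^ (n - 1) / (a + t ^ 2 * b) ^ n
      = (1 / (a * b) ^ ((n : ℝ) / 2)) *
          ∫ s in Set.Ioi (0 : ℝ), (Real.cosh (s - Real.log (b / a) / 2))⁻¹ ^ n := by
  obtain ⟨m, rfl⟩ : ∃ m, n = m + 1 := ⟨n - 1, (Nat.succ_pred_eq_of_pos hn).symm⟩
  have himg : (fun s : ℝ => Real.exp (-s)) '' Set.Ioi 0 = Set.Ioo 0 1 := by
    ext t
    simp only [Set.mem_image, Set.mem_Ioi, Set.mem_Ioo]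
    constructor
    · rintro ⟨s, hs, rfl⟩
      exact ⟨Real.exp_pos _, by rw [Real.exp_lt_one_iff]; linarith⟩
    · rintro ⟨ht0, ht1⟩
      exact ⟨-Real.log t, by simpa using Real.log_neg ht0 ht1, by simp [Real.exp_log ht0]⟩
  have hderiv : ∀ s ∈ Set.Ioi (0:ℝ),
      HasDerivWithinAt (fun s : ℝ => Real.exp (-s)) (Real.exp (-s) * (-1)) (Set.Ioi 0) s :=
    fun s _ => ((Real.hasDerivAt_exp (-s)).comp s (hasDerivAt_neg s)).hasDerivWithinAt
  have hinj : Set.InjOn (fun s : ℝ => Real.exp (-s)) (Set.Ioi 0) := fun x _ y _ h => by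
    have := Real.exp_injective h; linarith
  rw [intervalIntegral.integral_of_le zero_le_one, MeasureTheory.integral_Ioc_eq_integral_Ioo, ← himg,
    MeasureTheory.integral_image_eq_integral_abs_deriv_smul measurableSet_Ioi hderiv hinj,
    ← MeasureTheory.integral_const_mul]
  apply MeasureTheory.setIntegral_congr_fun measurableSet_Ioi
  intro s hs
  set t := Real.exp (-s) with ht
  have ht0 : (0:ℝ) < t := Real.exp_pos _
  have hsa : (0:ℝ) < Real.sqrt a := Real.sqrt_pos.mpr ha
  have hsb : (0:ℝ) < Real.sqrt b := Real.sqrt_pos.mpr hb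
  have ha2 : Real.sqrt a ^ 2 = a := Real.sq_sqrt ha.le
  have hb2 : Real.sqrt b ^ 2 = b := Real.sq_sqrt hb.le
  have hA : (0:ℝ) < a + t ^ 2 * b := by positivity
  have hq : Real.exp (Real.log (b / a) / 2) = Real.sqrt b / Real.sqrt a := by
    rw [← Real.sqrt_div hb.le, Real.sqrt_eq_rpow, Real.rpow_def_of_pos (div_pos hb ha),
      mul_one_div]
  have hes : Real.exp s = t⁻¹ := by rw [ht, Real.exp_neg, inv_inv]
  have hcosh : Real.cosh (s - Real.log (b / a) / 2)
      = (a + t ^ 2 * b) / (2 * t * (Real.sqrt a * Real.sqrt b)) := by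
    rw [Real.cosh_eq, neg_sub, Real.exp_sub, Real.exp_sub, hq, hes]
    field_simp
    linear_combination t ^ 2 * hb2 + ha2
  have hab : (a * b) ^ (((m + 1 : ℕ) : ℝ) / 2) = (Real.sqrt a * Real.sqrt b) ^ (m + 1) := by
    rw [← Real.sqrt_mul ha.le, Real.sqrt_eq_rpow,
      ← Real.rpow_natCast ((a * b) ^ ((1:ℝ)/2)) (m + 1),
      ← Real.rpow_mul (mul_pos ha hb).le]
    norm_num
    ring_nf
  have habs : |Real.exp (-s) * (-1)| = t := by
    rw [abs_mul, abs_neg, abs_one, mul_one, abs_of_pos ht0]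
  dsimp only
  rw [smul_eq_mul, habs, hcosh, inv_div, div_pow, hab]
  have hne : (a + t ^ 2 * b) ^ (m + 1) ≠ 0 := by positivity
  field_simp
  rw [← ht, Nat.add_sub_cancel]
  ring
end

section
/- For a, b > 0 and m ≥ 1, ∫_0^∞ cosh^{-(2m-1)}(s − α) ds = ((2m−3)!!/(2m−2)!!) ( 2 arctan √(b/a) + Σ_{k=1}^{m−1} ((2k−2)!!/(2k−1)!!) (b−a)(4ab)^{k−1/2} / (a+b)^{2k} ), where α = (1/2) log(b/a). -/
open MeasureTheory Real

section CoshIntAux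

open Set Filter

lemma abs_sinh_le_cosh (t : ℝ) : |Real.sinh t| ≤ Real.cosh t := by
  rw [Real.abs_sinh, ← Real.cosh_abs t]
  have h := Real.cosh_sub_sinh |t|
  have := Real.exp_pos (-|t|)
  linarith

lemma sech_pow_le (n : ℕ) (hn : 1 ≤ n) (t : ℝ) :
    (Real.cosh t)⁻¹ ^ n ≤ 2 * Real.exp (-t) := by
  have h1 : Real.exp t / 2 ≤ Real.cosh t := by
    have := Real.exp_pos (-t); rw [Real.cosh_eq]; linarith
  calc (Real.cosh t)⁻¹ ^ n ≤ (Real.cosh t)⁻¹ := by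
        apply pow_le_of_le_one (by positivity) _ (by omega)
        rw [inv_le_one_iff₀]; right; exact Real.one_le_cosh t
    _ ≤ (Real.exp t / 2)⁻¹ := inv_anti₀ (by positivity) h1
    _ = 2 * Real.exp (-t) := by rw [Real.exp_neg]; field_simp [mul_comm]

lemma integrable_sech_pow (n : ℕ) (hn : 1 ≤ n) (α : ℝ) :
    IntegrableOn (fun s => (Real.cosh (s - α))⁻¹ ^ n) (Set.Ioi (0:ℝ)) := by
  have hg : IntegrableOn (fun s => (2 * Real.exp α) * Real.exp (-1 * s)) (Set.Ioi (0:ℝ)) :=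
    (exp_neg_integrableOn_Ioi 0 one_pos).const_mul _
  refine hg.mono' ?_ ?_
  · exact (((Real.continuous_cosh.comp (continuous_id.sub continuous_const)).inv₀
      (fun s => (Real.cosh_pos _).ne')).pow n).aestronglyMeasurable
  · filter_upwards with s
    have h := sech_pow_le n hn (s - α)
    have h0 : (0:ℝ) ≤ (Real.cosh (s - α))⁻¹ ^ n := by positivity
    rw [Real.norm_eq_abs, abs_of_nonneg h0]
    calc (Real.cosh (s-α))⁻¹ ^ n ≤ 2 * Real.exp (-(s-α)) := h
      _ = 2 * Real.exp α * Real.exp (-1 * s) := by rw [mul_assoc, ← Real.exp_add]; ring_nf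

lemma hasDerivAt_sinh_mul_sech_pow (n : ℕ) (hn : 1 ≤ n) (α s : ℝ) :
    HasDerivAt (fun s => Real.sinh (s - α) * (Real.cosh (s - α))⁻¹ ^ n)
      ((1 - (n:ℝ)) * (Real.cosh (s - α))⁻¹ ^ (n - 1)
        + (n:ℝ) * (Real.cosh (s - α))⁻¹ ^ (n + 1)) s := by
  obtain ⟨j, rfl⟩ : ∃ j, n = j + 1 := ⟨n - 1, by omega⟩
  have hid : HasDerivAt (fun s : ℝ => s - α) 1 s := (hasDerivAt_id s).sub_const α
  have hsinh : HasDerivAt (fun s : ℝ => Real.sinh (s - α)) (Real.cosh (s - α)) s := by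
    simpa using hid.sinh
  have hcosh : HasDerivAt (fun s : ℝ => Real.cosh (s - α)) (Real.sinh (s - α)) s := by
    simpa using hid.cosh
  have hc := Real.cosh_pos (s - α)
  have hinv := hcosh.inv hc.ne'
  have hpow := hinv.pow (j + 1)
  have h := hsinh.mul hpow
  convert h using 1
  case e'_4 | e'_5 | e'_8 => rfl
  simp only [Pi.inv_apply, Pi.pow_apply, Nat.add_sub_cancel]
  set c := Real.cosh (s - α)
  set S := Real.sinh (s - α)
  have hS : S ^ 2 = c ^ 2 - 1 := by have := Real.cosh_sq (s - α); simp only [c, S]; linarith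
  have hcne : c ≠ 0 := hc.ne'
  field_simp
  ring_nf
  rw [hS]
  field_simp
  ring

lemma tendsto_sinh_mul_sech_pow (n : ℕ) (hn : 1 ≤ n) (α : ℝ) :
    Tendsto (fun s => Real.sinh (s - α) * (Real.cosh (s - α))⁻¹ ^ (n + 1))
      atTop (nhds 0) := by
  rw [tendsto_zero_iff_norm_tendsto_zero]
  apply squeeze_zero (g := fun s => 2 * Real.exp α * Real.exp (-s)) (fun s => norm_nonneg _)
  · intro s
    have hc := Real.cosh_pos (s - α)
    rw [Real.norm_eq_abs, abs_mul, abs_of_nonneg (by positivity :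
      (0:ℝ) ≤ (Real.cosh (s-α))⁻¹ ^ (n+1))]
    calc |Real.sinh (s-α)| * (Real.cosh (s-α))⁻¹ ^ (n+1)
        ≤ Real.cosh (s-α) * (Real.cosh (s-α))⁻¹ ^ (n+1) := by
          apply mul_le_mul_of_nonneg_right (abs_sinh_le_cosh _) (by positivity)
      _ = (Real.cosh (s-α))⁻¹ ^ n := by
          rw [pow_succ']; field_simp
      _ ≤ 2 * Real.exp (-(s - α)) := sech_pow_le n hn _
      _ = 2 * Real.exp α * Real.exp (-s) := by
          rw [mul_assoc, ← Real.exp_add]; ring_nf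
  · rw [show (0:ℝ) = 2 * Real.exp α * 0 by ring]
    exact (Real.tendsto_exp_atBot.comp tendsto_neg_atTop_atBot).const_mul _

lemma tendsto_arctan_sinh (α : ℝ) :
    Tendsto (fun s => Real.arctan (Real.sinh (s - α))) atTop (nhds (π / 2)) := by
  have hsinh : Tendsto (fun s => Real.sinh (s - α)) atTop atTop := by
    apply tendsto_atTop_mono' _ (_ : ∀ᶠ s in atTop, (Real.exp (s - α) - 1)/2 ≤ Real.sinh (s-α))
    · have h1 : Tendsto (fun s : ℝ => Real.exp (s - α)) atTop atTop :=
        Real.tendsto_exp_atTop.comp (tendsto_atTop_add_const_right _ _ tendsto_id)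
      exact ((tendsto_atTop_add_const_right _ (-1) h1).atTop_div_const two_pos)
    · filter_upwards [eventually_ge_atTop α] with s hs
      rw [Real.sinh_eq]
      have : Real.exp (-(s-α)) ≤ 1 := Real.exp_le_one_iff.mpr (by linarith)
      linarith
  exact (Real.tendsto_arctan_atTop.comp hsinh).mono_right nhdsWithin_le_nhds

lemma sech_base (α : ℝ) :
    ∫ s in Set.Ioi (0:ℝ), (Real.cosh (s - α))⁻¹ ^ 1
      = π / 2 + Real.arctan (Real.sinh α) := by
  have hderiv : ∀ s ∈ Set.Ici (0:ℝ),
      HasDerivAt (fun s => Real.arctan (Real.sinh (s - α)))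
        ((Real.cosh (s - α))⁻¹ ^ 1) s := by
    intro s _
    have hid : HasDerivAt (fun s : ℝ => s - α) 1 s := (hasDerivAt_id s).sub_const α
    have hsinh : HasDerivAt (fun s : ℝ => Real.sinh (s - α)) (Real.cosh (s - α)) s := by
      simpa using hid.sinh
    have h := hsinh.arctan
    convert h using 1
    have hc := Real.cosh_pos (s - α)
    have h2 : 1 + Real.sinh (s-α)^2 = Real.cosh (s-α)^2 := by rw [Real.cosh_sq]; ring
    rw [pow_one, h2]
    field_simp
  have := integral_Ioi_of_hasDerivAt_of_tendsto' hderiv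
    (integrable_sech_pow 1 le_rfl α) (tendsto_arctan_sinh α)
  rw [this, zero_sub, Real.sinh_neg, Real.arctan_neg]
  ring

lemma sech_recursion (k : ℕ) (hk : 1 ≤ k) (α : ℝ) :
    (2*k : ℝ) * ∫ s in Set.Ioi (0:ℝ), (Real.cosh (s-α))⁻¹ ^ (2*k+1)
      = Real.sinh α * (Real.cosh α)⁻¹ ^ (2*k)
        + (2*(k:ℝ)-1) * ∫ s in Set.Ioi (0:ℝ), (Real.cosh (s-α))⁻¹ ^ (2*k-1) := by
  have h1 : IntegrableOn (fun s => (Real.cosh (s-α))⁻¹ ^ (2*k-1)) (Set.Ioi (0:ℝ)) :=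
    integrable_sech_pow _ (by omega) α
  have h2 : IntegrableOn (fun s => (Real.cosh (s-α))⁻¹ ^ (2*k+1)) (Set.Ioi (0:ℝ)) :=
    integrable_sech_pow _ (by omega) α
  have ht : Tendsto (fun s => Real.sinh (s - α) * (Real.cosh (s - α))⁻¹ ^ (2*k))
      atTop (nhds 0) := by
    have := tendsto_sinh_mul_sech_pow (2*k-1) (by omega) α
    rwa [show 2*k-1+1 = 2*k from by omega] at this
  have hFTC := integral_Ioi_of_hasDerivAt_of_tendsto'
    (fun x _ => hasDerivAt_sinh_mul_sech_pow (2*k) (by omega) α x)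
    (by exact (h1.const_mul (1 - ((2*k:ℕ):ℝ))).add (h2.const_mul ((2*k:ℕ):ℝ)))
    ht
  rw [MeasureTheory.integral_add (h1.const_mul _) (h2.const_mul _),
    MeasureTheory.integral_const_mul, MeasureTheory.integral_const_mul] at hFTC
  rw [zero_sub, zero_sub, Real.sinh_neg, Real.cosh_neg] at hFTC
  push_cast [show ((2*k-1 : ℕ) : ℝ) = 2*(k:ℝ)-1 from by
    push_cast [Nat.cast_sub (by omega : 1 ≤ 2*k)]; ring] at hFTC ⊢
  linarith

lemma two_arctan_eq (x : ℝ) (hx : 0 < x) :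
    π / 2 + Real.arctan ((x - x⁻¹)/2) = 2 * Real.arctan x := by
  have hxx : x * x⁻¹ = 1 := mul_inv_cancel₀ hx.ne'
  have h := Real.arctan_add (x := x) (y := -x⁻¹) (by rw [mul_neg, hxx]; norm_num)
  rw [Real.arctan_neg, Real.arctan_inv_of_pos hx] at h
  rw [show (x + -x⁻¹) / (1 - x * -x⁻¹) = (x - x⁻¹)/2 from by rw [mul_neg, hxx]; ring] at h
  linarith

lemma exp_half_log (a b : ℝ) (ha : 0 < a) (hb : 0 < b) :
    Real.exp (Real.log (b/a) / 2) = Real.sqrt (b/a) := by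
  rw [← Real.log_sqrt (le_of_lt (div_pos hb ha)),
    Real.exp_log (Real.sqrt_pos.2 (div_pos hb ha))]

lemma sinh_half_log (a b : ℝ) (ha : 0 < a) (hb : 0 < b) :
    Real.sinh (Real.log (b/a) / 2) = (b - a) / (2 * Real.sqrt a * Real.sqrt b) := by
  have hsa : 0 < Real.sqrt a := Real.sqrt_pos.2 ha
  have hsb : 0 < Real.sqrt b := Real.sqrt_pos.2 hb
  rw [Real.sinh_eq, Real.exp_neg, exp_half_log a b ha hb,
    Real.sqrt_div hb.le, inv_div]
  field_simp
  rw [Real.sq_sqrt hb.le, Real.sq_sqrt ha.le]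

lemma cosh_half_log (a b : ℝ) (ha : 0 < a) (hb : 0 < b) :
    Real.cosh (Real.log (b/a) / 2) = (a + b) / (2 * Real.sqrt a * Real.sqrt b) := by
  have hsa : 0 < Real.sqrt a := Real.sqrt_pos.2 ha
  have hsb : 0 < Real.sqrt b := Real.sqrt_pos.2 hb
  rw [Real.cosh_eq, Real.exp_neg, exp_half_log a b ha hb,
    Real.sqrt_div hb.le, inv_div]
  field_simp
  rw [Real.sq_sqrt hb.le, Real.sq_sqrt ha.le]
  ring

lemma term_eq (a b : ℝ) (ha : 0 < a) (hb : 0 < b) (k : ℕ) :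
    Real.sinh (Real.log (b/a) / 2) * (Real.cosh (Real.log (b/a) / 2))⁻¹ ^ (2*k)
      = (b - a) * (4*a*b) ^ ((k:ℝ) - 1/2) / (a+b) ^ (2*k) := by
  have hsa : 0 < Real.sqrt a := Real.sqrt_pos.2 ha
  have hsb : 0 < Real.sqrt b := Real.sqrt_pos.2 hb
  have hab : 0 < a + b := by linarith
  have h4 : (0:ℝ) < 4*a*b := by positivity
  have hsq : (2 * Real.sqrt a * Real.sqrt b) ^ 2 = 4*a*b := by
    rw [mul_pow, mul_pow, Real.sq_sqrt ha.le, Real.sq_sqrt hb.le]; ring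
  have hrpow : (4*a*b) ^ ((k:ℝ) - 1/2)
      = (4*a*b) ^ k / (2 * Real.sqrt a * Real.sqrt b) := by
    rw [show ((k:ℝ) - 1/2) = (k:ℝ) + (-(1/2)) from by ring, Real.rpow_add h4,
      Real.rpow_natCast, Real.rpow_neg h4.le, ← Real.sqrt_eq_rpow, ← hsq,
      Real.sqrt_sq (by positivity)]
    ring
  rw [sinh_half_log a b ha hb, cosh_half_log a b ha hb, hrpow]
  rw [inv_div, div_pow, pow_mul, hsq]
  field_simp

lemma dfac_cast_odd (j : ℕ) : ((2*(j+1)-1).doubleFactorial : ℝ)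
    = (2*(j:ℝ)+1) * ((2*(j+1)-3).doubleFactorial : ℝ) := by
  cases j with
  | zero => norm_num [Nat.doubleFactorial]
  | succ i =>
    rw [show 2*(i+1+1)-1 = (2*i+1)+2 from by omega, Nat.doubleFactorial_add_two,
      show 2*(i+1+1)-3 = 2*i+1 from by omega]
    push_cast
    ring

lemma dfac_cast_even (j : ℕ) : ((2*(j+1)-2+2).doubleFactorial : ℝ)
    = (2*(j:ℝ)+2) * ((2*(j+1)-2).doubleFactorial : ℝ) := by
  rw [Nat.doubleFactorial_add_two]
  push_cast [show 2*(j+1)-2 = 2*j from by omega]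
  ring

end CoshIntAux

/-- Closed form of `I[-(2m-1)] = ∫₀^∞ cosh^{-(2m-1)}(s−α) ds`, `α = ½ log(b/a)`. -/
theorem coshInt_odd (m : ℕ) (hm : 1 ≤ m) (a b : ℝ) (ha : 0 < a) (hb : 0 < b) :
    (∫ s in Set.Ioi (0 : ℝ), (Real.cosh (s - Real.log (b / a) / 2))⁻¹ ^ (2 * m - 1))
      = ((Nat.doubleFactorial (2 * m - 3) : ℝ) / (Nat.doubleFactorial (2 * m - 2) : ℝ)) *
          (2 * Real.arctan (Real.sqrt (b / a)) +
            ∑ k ∈ Finset.Icc 1 (m - 1),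
              ((Nat.doubleFactorial (2 * k - 2) : ℝ) / (Nat.doubleFactorial (2 * k - 1) : ℝ)) *
                ((b - a) * (4 * a * b) ^ ((k : ℝ) - 1 / 2) / (a + b) ^ (2 * k))) := by
  have hx : 0 < Real.sqrt (b/a) := Real.sqrt_pos.2 (div_pos hb ha)
  induction m, hm using Nat.le_induction with
  | base =>
    have hs : Real.sinh (Real.log (b/a)/2)
        = (Real.sqrt (b/a) - (Real.sqrt (b/a))⁻¹)/2 := by
      rw [Real.sinh_eq, Real.exp_neg, exp_half_log a b ha hb]
    have hbase := sech_base (Real.log (b/a)/2)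
    rw [hs, two_arctan_eq _ hx] at hbase
    simpa [Nat.doubleFactorial] using hbase
  | succ m hm ih =>
    obtain ⟨j, rfl⟩ : ∃ j, m = j + 1 := ⟨m - 1, by omega⟩
    have hrec := sech_recursion (j+1) (by omega) (Real.log (b/a)/2)
    rw [show (j+1)-1 = j from by omega] at ih
    rw [term_eq a b ha hb (j+1)] at hrec
    rw [ih] at hrec
    rw [show 2*(j+1+1)-1 = 2*(j+1)+1 from by omega,
      show 2*(j+1+1)-3 = 2*(j+1)-1 from by omega,
      show 2*(j+1+1)-2 = 2*(j+1)-2+2 from by omega,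
      show (j+1+1)-1 = j+1 from by omega,
      Finset.sum_Icc_succ_top (by omega : (1:ℕ) ≤ j+1),
      dfac_cast_odd j, dfac_cast_even j]
    set A := 2 * Real.arctan (Real.sqrt (b/a))
    set S := ∑ k ∈ Finset.Icc 1 j,
      ((Nat.doubleFactorial (2 * k - 2) : ℝ) / (Nat.doubleFactorial (2 * k - 1) : ℝ)) *
        ((b - a) * (4 * a * b) ^ ((k : ℝ) - 1 / 2) / (a + b) ^ (2 * k))
    set T := (b - a) * (4*a*b) ^ (((j+1:ℕ):ℝ) - 1/2) / (a+b) ^ (2*(j+1))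
    set J := ∫ s in Set.Ioi (0:ℝ), (Real.cosh (s - Real.log (b/a)/2))⁻¹ ^ (2*(j+1)+1)
    set D1 := ((2*(j+1)-3).doubleFactorial : ℝ)
    set D2 := ((2*(j+1)-2).doubleFactorial : ℝ)
    have hD1 : (0:ℝ) < D1 := Nat.cast_pos.mpr (Nat.doubleFactorial_pos _)
    have hD2 : (0:ℝ) < D2 := Nat.cast_pos.mpr (Nat.doubleFactorial_pos _)
    have hj1 : (0:ℝ) < 2*(j:ℝ)+1 := by positivity
    have hj2 : (0:ℝ) < 2*(j:ℝ)+2 := by positivity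
    have hrec' : (2*((j:ℝ)+1)) * J = T + (2*((j:ℝ)+1)-1) * (D1/D2 * (A + S)) := by
      push_cast at hrec ⊢
      convert hrec using 2
    have hJ : J = (T + (2*(j:ℝ)+1) * (D1/D2 * (A + S))) / (2*(j:ℝ)+2) := by
      rw [eq_div_iff (by positivity)]
      linear_combination hrec'
    rw [hJ]
    field_simp
    ring
end

section
/- Define X_n for a, b > 0 recursively by X_1 = arctan(√(b/a)) / √(ab), X_2 = 1/(2a(a+b)), and X_n = (∂/∂a)(∂/∂b) X_{n-2}. Then X_n satisfies the recursion X_n = (1/(4ab)) ( (n−2)^2 X_{n−2} + (n−2)! (b−a)/(a+b)^{n−1} ) for n ≥ 3. -/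
open Real

/-- `X_n`, defined by `X_1 = arctan(√(b/a))/√(ab)`, `X_2 = 1/(2a(a+b))`,
`X_{n+2} = ∂_a ∂_b X_n`. -/
noncomputable def X : ℕ → ℝ → ℝ → ℝ
  | 0, _, _ => 0
  | 1, a, b => Real.arctan (Real.sqrt (b / a)) / Real.sqrt (a * b)
  | 2, a, b => 1 / (2 * a * (a + b))
  | n + 3, a, b => deriv (fun a' => deriv (fun b' => X (n + 1) a' b') b) a

/-- the `a`-partial derivative of `X n`. -/
noncomputable def dA (n : ℕ) (a b : ℝ) : ℝ :=
  -((n : ℝ) * X n a b + (Nat.factorial (n - 1) : ℝ) / (a + b) ^ n) / (2 * a)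

/-- the `b`-partial derivative of `X n`. -/
noncomputable def dB (n : ℕ) (a b : ℝ) : ℝ :=
  ((Nat.factorial (n - 1) : ℝ) / (a + b) ^ n - (n : ℝ) * X n a b) / (2 * b)

def P (n : ℕ) : Prop := ∀ a b : ℝ, 0 < a → 0 < b →
  HasDerivAt (fun a' => X n a' b) (dA n a b) a ∧
  HasDerivAt (fun b' => X n a b') (dB n a b) b

lemma P2 : P 2 := by
  intro a b ha hb
  have hab : (0:ℝ) < a + b := by linarith
  constructor
  · have hg : HasDerivAt (fun a' : ℝ => 2 * a' * (a' + b)) (2 * 1 * (a + b) + 2 * a * 1) a := by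
      simpa using (((hasDerivAt_id a).const_mul 2)).fun_mul ((hasDerivAt_id a).add_const b)
    have h := (hasDerivAt_const a (1:ℝ)).fun_div hg (by positivity)
    convert (config := { preTransparency := .default }) h using 1
    simp only [dA, X, Nat.factorial]
    push_cast
    field_simp
    ring
  · have hg : HasDerivAt (fun b' : ℝ => 2 * a * (a + b')) (2 * a * 1) b := by
      simpa using ((hasDerivAt_id b).const_add a).const_mul (2 * a)
    have h := (hasDerivAt_const b (1:ℝ)).fun_div hg (by positivity)
    convert (config := { preTransparency := .default }) h using 1
    simp only [dB, X, Nat.factorial]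
    push_cast
    field_simp
    ring


lemma P1 : P 1 := by
  intro a b ha hb
  obtain ⟨s, hs, rfl⟩ : ∃ s : ℝ, 0 < s ∧ a = s ^ 2 :=
    ⟨Real.sqrt a, Real.sqrt_pos.2 ha, (Real.sq_sqrt ha.le).symm⟩
  obtain ⟨t, ht, rfl⟩ : ∃ t : ℝ, 0 < t ∧ b = t ^ 2 :=
    ⟨Real.sqrt b, Real.sqrt_pos.2 hb, (Real.sq_sqrt hb.le).symm⟩
  have hq : Real.sqrt (t ^ 2 / s ^ 2) = t / s := by
    rw [Real.sqrt_div (by positivity), Real.sqrt_sq ht.le, Real.sqrt_sq hs.le]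
  have hm : Real.sqrt (s ^ 2 * t ^ 2) = s * t := by
    rw [Real.sqrt_mul (by positivity), Real.sqrt_sq ht.le, Real.sqrt_sq hs.le]
  constructor
  · -- a-derivative
    have h1 : HasDerivAt (fun a' : ℝ => t ^ 2 / a') (-t ^ 2 / (s ^ 2) ^ 2) (s ^ 2) := by
      simpa using (hasDerivAt_const (s ^ 2) (t ^ 2)).fun_div (hasDerivAt_id (s ^ 2)) (by positivity)
    have h2 := h1.sqrt (by positivity)
    have h3 := h2.arctan
    have h4 : HasDerivAt (fun a' : ℝ => a' * t ^ 2) (t ^ 2) (s ^ 2) := by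
      simpa using (hasDerivAt_id (s ^ 2)).mul_const (t ^ 2)
    have h5 := h4.sqrt (by positivity)
    have h6 := h3.fun_div h5 (by rw [hm]; positivity)
    convert (config := { preTransparency := .default }) h6 using 1
    simp only [dA, X, hq, hm, Nat.factorial]
    push_cast
    have hst : (0:ℝ) < s ^ 2 + t ^ 2 := by positivity
    field_simp
    ring
  · -- b-derivative
    have h1 : HasDerivAt (fun b' : ℝ => b' / s ^ 2) (1 / s ^ 2) (t ^ 2) := by
      simpa using (hasDerivAt_id (t ^ 2)).div_const (s ^ 2)
    have h2 := h1.sqrt (by positivity)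
    have h3 := h2.arctan
    have h4 : HasDerivAt (fun b' : ℝ => s ^ 2 * b') (s ^ 2) (t ^ 2) := by
      simpa using (hasDerivAt_id (t ^ 2)).const_mul (s ^ 2)
    have h5 := h4.sqrt (by positivity)
    have h6 := h3.fun_div h5 (by rw [hm]; positivity)
    convert (config := { preTransparency := .default }) h6 using 1
    simp only [dB, X, hq, hm, Nat.factorial]
    push_cast
    field_simp
    ring

lemma step_formula (m : ℕ) (hP : P (m + 1)) (a b : ℝ) (ha : 0 < a) (hb : 0 < b) :
    X (m + 3) a b = 1 / (4 * a * b) *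
      (((m : ℝ) + 1) ^ 2 * X (m + 1) a b +
        (Nat.factorial (m + 1) : ℝ) * (b - a) / (a + b) ^ (m + 2)) := by
  have hab : (0:ℝ) < a + b := by linarith
  have hev : (fun a' => deriv (fun b' => X (m + 1) a' b') b) =ᶠ[nhds a]
      (fun a' => dB (m + 1) a' b) := by
    filter_upwards [Ioi_mem_nhds ha] with x hx
    exact ((hP x b hx hb).2).deriv
  have hX : X (m + 3) a b = deriv (fun a' => dB (m + 1) a' b) a := by
    show deriv (fun a' => deriv (fun b' => X (m + 1) a' b') b) a = _
    exact hev.deriv_eq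
  have hpow : HasDerivAt (fun a' : ℝ => (a' + b) ^ (m + 1))
      (((m : ℝ) + 1) * (a + b) ^ m) a := by
    simpa using ((hasDerivAt_id a).add_const b).fun_pow (m + 1)
  have hfrac := (hasDerivAt_const a ((Nat.factorial m : ℝ))).fun_div hpow (by positivity)
  have hXa := (hP a b ha hb).1
  have hdB : HasDerivAt (fun a' => dB (m + 1) a' b)
      (((0 * (a + b) ^ (m + 1) - (Nat.factorial m : ℝ) * (((m : ℝ) + 1) * (a + b) ^ m)) /
          ((a + b) ^ (m + 1)) ^ 2 - ((m : ℝ) + 1) * dA (m + 1) a b) / (2 * b)) a := by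
    simp only [dB, Nat.add_sub_cancel]
    have := (hfrac.fun_sub (hXa.const_mul ((m : ℝ) + 1))).div_const (2 * b)
    convert (config := { preTransparency := .default }) this using 2
    push_cast
    ring
  rw [hX, hdB.deriv]
  simp only [dA, Nat.add_sub_cancel]
  have hq : (a + b) ^ m ≠ 0 := by positivity
  push_cast [Nat.factorial_succ, pow_succ]
  field_simp
  ring

lemma step_P (m : ℕ) (hP : P (m + 1)) : P (m + 3) := by
  intro a b ha hb
  have hab : (0:ℝ) < a + b := by linarith
  have heq32 : m + 3 - 1 = m + 2 := by omega
  constructor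
  · -- a-derivative of X (m+3)
    have hev : (fun a' => X (m + 3) a' b) =ᶠ[nhds a]
        (fun a' => 1 / (4 * a' * b) * (((m : ℝ) + 1) ^ 2 * X (m + 1) a' b +
          (Nat.factorial (m + 1) : ℝ) * (b - a') / (a' + b) ^ (m + 2))) := by
      filter_upwards [Ioi_mem_nhds ha] with x hx
      exact step_formula m hP x b hx hb
    have hden : HasDerivAt (fun a' : ℝ => 4 * a' * b) (4 * b) a := by
      simpa using ((hasDerivAt_id a).const_mul 4).mul_const b
    have hinv := (hasDerivAt_const a (1:ℝ)).fun_div hden (by positivity)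
    have hN1 : HasDerivAt (fun a' => ((m : ℝ) + 1) ^ 2 * X (m + 1) a' b)
        (((m : ℝ) + 1) ^ 2 * dA (m + 1) a b) a := (hP a b ha hb).1.const_mul _
    have hnum : HasDerivAt (fun a' : ℝ => (Nat.factorial (m + 1) : ℝ) * (b - a'))
        (-(Nat.factorial (m + 1) : ℝ)) a := by
      simpa using ((hasDerivAt_const a b).fun_sub (hasDerivAt_id a)).const_mul
        ((Nat.factorial (m + 1) : ℝ))
    have hpow2 : HasDerivAt (fun a' : ℝ => (a' + b) ^ (m + 2))
        (((m : ℝ) + 2) * (a + b) ^ (m + 1)) a := by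
      have := ((hasDerivAt_id a).add_const b).fun_pow (m + 2)
      simp only [Nat.add_sub_cancel, id_eq, mul_one] at this
      convert (config := { preTransparency := .default }) this using 2
      push_cast; ring
    have hN2 := hnum.fun_div hpow2 (by positivity)
    have hE := hinv.fun_mul (hN1.fun_add hN2)
    have hfin := hE.congr_of_eventuallyEq hev
    convert (config := { preTransparency := .default }) hfin using 1
    have hX3 := step_formula m hP a b ha hb
    simp only [dA, heq32, Nat.add_sub_cancel, hX3]
    have hq : (a + b) ^ m ≠ 0 := by positivity
    push_cast [Nat.factorial_succ, pow_succ]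
    field_simp
    ring
  · -- b-derivative of X (m+3)
    have hev : (fun b' => X (m + 3) a b') =ᶠ[nhds b]
        (fun b' => 1 / (4 * a * b') * (((m : ℝ) + 1) ^ 2 * X (m + 1) a b' +
          (Nat.factorial (m + 1) : ℝ) * (b' - a) / (a + b') ^ (m + 2))) := by
      filter_upwards [Ioi_mem_nhds hb] with y hy
      exact step_formula m hP a y ha hy
    have hden : HasDerivAt (fun b' : ℝ => 4 * a * b') (4 * a) b := by
      simpa using (hasDerivAt_id b).const_mul (4 * a)
    have hinv := (hasDerivAt_const b (1:ℝ)).fun_div hden (by positivity)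
    have hN1 : HasDerivAt (fun b' => ((m : ℝ) + 1) ^ 2 * X (m + 1) a b')
        (((m : ℝ) + 1) ^ 2 * dB (m + 1) a b) b := (hP a b ha hb).2.const_mul _
    have hnum : HasDerivAt (fun b' : ℝ => (Nat.factorial (m + 1) : ℝ) * (b' - a))
        ((Nat.factorial (m + 1) : ℝ)) b := by
      simpa using ((hasDerivAt_id b).sub_const a).const_mul ((Nat.factorial (m + 1) : ℝ))
    have hpow2 : HasDerivAt (fun b' : ℝ => (a + b') ^ (m + 2))
        (((m : ℝ) + 2) * (a + b) ^ (m + 1)) b := by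
      have := ((hasDerivAt_id b).const_add a).fun_pow (m + 2)
      simp only [Nat.add_sub_cancel, id_eq, mul_one] at this
      convert (config := { preTransparency := .default }) this using 2
      push_cast; ring
    have hN2 := hnum.fun_div hpow2 (by positivity)
    have hE := hinv.fun_mul (hN1.fun_add hN2)
    have hfin := hE.congr_of_eventuallyEq hev
    convert (config := { preTransparency := .default }) hfin using 1
    have hX3 := step_formula m hP a b ha hb
    simp only [dB, heq32, Nat.add_sub_cancel, hX3]
    have hq : (a + b) ^ m ≠ 0 := by positivity
    push_cast [Nat.factorial_succ, pow_succ]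
    field_simp
    ring

lemma Pall : ∀ n : ℕ, P (n + 1)
  | 0 => P1
  | 1 => P2
  | n + 2 => step_P n (Pall n)

/-- `X_n = (1/(4ab)) ((n−2)² X_{n−2} + (n−2)! (b−a)/(a+b)^{n−1})` for `n ≥ 3`. -/
theorem X_recursion (n : ℕ) (hn : 3 ≤ n) (a b : ℝ) (ha : 0 < a) (hb : 0 < b) :
    X n a b = (1 / (4 * a * b)) *
      (((n : ℝ) - 2) ^ 2 * X (n - 2) a b +
        (Nat.factorial (n - 2) : ℝ) * (b - a) / (a + b) ^ (n - 1)) := by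
  obtain ⟨m, rfl⟩ : ∃ m, n = m + 3 := ⟨n - 3, by omega⟩
  have h := step_formula m (Pall m) a b ha hb
  have h2 : m + 3 - 2 = m + 1 := by omega
  have h3 : m + 3 - 1 = m + 2 := by omega
  rw [h2, h3] at *
  rw [h]
  push_cast
  ring_nf
end

section
/- Let X_1(a,b) = arctan(√(b/a))/√(ab) on (0,∞)². Then X_1 satisfies S X_1 = −X_1 and T X_1 = 1/(a+b), where S = a ∂/∂a + b ∂/∂b and T = −a ∂/∂a + b ∂/∂b. -/
open Real in
private lemma X1_deriv_a {a b : ℝ} (ha : 0 < a) (hb : 0 < b) :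
    deriv (fun a' => Real.arctan (Real.sqrt (b / a')) / Real.sqrt (a' * b)) a
      = -1 / (2 * a * (a + b)) -
        Real.arctan (Real.sqrt b / Real.sqrt a) / (2 * a * Real.sqrt a * Real.sqrt b) := by
  have hab : (0:ℝ) < a * b := mul_pos ha hb
  have h1 : HasDerivAt (fun a' : ℝ => b / a') (b * -(a ^ 2)⁻¹) a := by
    simpa [div_eq_mul_inv] using (hasDerivAt_inv ha.ne').const_mul b
  have h2 : HasDerivAt (fun a' : ℝ => Real.sqrt (b / a'))
      (1 / (2 * Real.sqrt (b / a)) * (b * -(a ^ 2)⁻¹)) a :=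
    (Real.hasDerivAt_sqrt (by positivity : b / a ≠ 0)).comp a h1
  have h3 : HasDerivAt (fun a' : ℝ => Real.arctan (Real.sqrt (b / a')))
      (1 / (1 + Real.sqrt (b / a) ^ 2) * (1 / (2 * Real.sqrt (b / a)) * (b * -(a ^ 2)⁻¹))) a :=
    (Real.hasDerivAt_arctan _).comp a h2
  have h4 : HasDerivAt (fun a' : ℝ => Real.sqrt (a' * b))
      (1 / (2 * Real.sqrt (a * b)) * b) a :=
    (Real.hasDerivAt_sqrt hab.ne').comp a (by simpa using (hasDerivAt_id a).mul_const b)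
  have h5 := (h3.div h4 (Real.sqrt_ne_zero'.mpr hab))
  rw [(show HasDerivAt (fun a' => Real.arctan (Real.sqrt (b / a')) / Real.sqrt (a' * b)) _ a from h5).deriv]
  have sa := Real.sq_sqrt ha.le
  have sb := Real.sq_sqrt hb.le
  have hsa : (0:ℝ) < Real.sqrt a := Real.sqrt_pos.mpr ha
  have hsb : (0:ℝ) < Real.sqrt b := Real.sqrt_pos.mpr hb
  have e1 : Real.sqrt (b / a) = Real.sqrt b / Real.sqrt a := Real.sqrt_div hb.le a
  have e2 : Real.sqrt (a * b) = Real.sqrt a * Real.sqrt b := Real.sqrt_mul ha.le b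
  rw [e1, e2]
  set sA := Real.sqrt a
  set sB := Real.sqrt b
  set t := Real.arctan (sB / sA)
  have haa : a = sA ^ 2 := sa.symm
  have hbb : b = sB ^ 2 := sb.symm
  rw [haa, hbb]
  have h0 : (0:ℝ) < sA ^ 2 + sB ^ 2 := by positivity
  field_simp

open Real in
private lemma X1_deriv_b {a b : ℝ} (ha : 0 < a) (hb : 0 < b) :
    deriv (fun b' => Real.arctan (Real.sqrt (b' / a)) / Real.sqrt (a * b')) b
      = 1 / (2 * b * (a + b)) -
        Real.arctan (Real.sqrt b / Real.sqrt a) / (2 * b * Real.sqrt a * Real.sqrt b) := by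
  have hab : (0:ℝ) < a * b := mul_pos ha hb
  have h1 : HasDerivAt (fun b' : ℝ => b' / a) (1 / a) b := by
    simpa [div_eq_mul_inv, one_div] using (hasDerivAt_id b).mul_const a⁻¹
  have h2 : HasDerivAt (fun b' : ℝ => Real.sqrt (b' / a))
      (1 / (2 * Real.sqrt (b / a)) * (1 / a)) b :=
    (Real.hasDerivAt_sqrt (by positivity : b / a ≠ 0)).comp b h1
  have h3 : HasDerivAt (fun b' : ℝ => Real.arctan (Real.sqrt (b' / a)))
      (1 / (1 + Real.sqrt (b / a) ^ 2) * (1 / (2 * Real.sqrt (b / a)) * (1 / a))) b :=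
    (Real.hasDerivAt_arctan _).comp b h2
  have h4 : HasDerivAt (fun b' : ℝ => Real.sqrt (a * b'))
      (1 / (2 * Real.sqrt (a * b)) * a) b :=
    (Real.hasDerivAt_sqrt hab.ne').comp b (by simpa using (hasDerivAt_id b).const_mul a)
  have h5 := (h3.div h4 (Real.sqrt_ne_zero'.mpr hab))
  rw [(show HasDerivAt (fun b' => Real.arctan (Real.sqrt (b' / a)) / Real.sqrt (a * b')) _ b from h5).deriv]
  have sa := Real.sq_sqrt ha.le
  have sb := Real.sq_sqrt hb.le
  have hsa : (0:ℝ) < Real.sqrt a := Real.sqrt_pos.mpr ha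
  have hsb : (0:ℝ) < Real.sqrt b := Real.sqrt_pos.mpr hb
  have e1 : Real.sqrt (b / a) = Real.sqrt b / Real.sqrt a := Real.sqrt_div hb.le a
  have e2 : Real.sqrt (a * b) = Real.sqrt a * Real.sqrt b := Real.sqrt_mul ha.le b
  rw [e1, e2]
  set sA := Real.sqrt a
  set sB := Real.sqrt b
  set t := Real.arctan (sB / sA)
  have haa : a = sA ^ 2 := sa.symm
  have hbb : b = sB ^ 2 := sb.symm
  rw [haa, hbb]
  have h0 : (0:ℝ) < sA ^ 2 + sB ^ 2 := by positivity
  field_simp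

/-- `X₁ = arctan(√(b/a))/√(ab)` satisfies `S X₁ = −X₁` and `T X₁ = 1/(a+b)`,
where `S = a∂_a + b∂_b` and `T = −a∂_a + b∂_b`. -/
theorem X1_ST (a b : ℝ) (ha : 0 < a) (hb : 0 < b) :
    (a * deriv (fun a' => Real.arctan (Real.sqrt (b / a')) / Real.sqrt (a' * b)) a +
        b * deriv (fun b' => Real.arctan (Real.sqrt (b' / a)) / Real.sqrt (a * b')) b
      = -(Real.arctan (Real.sqrt (b / a)) / Real.sqrt (a * b))) ∧
    (-(a * deriv (fun a' => Real.arctan (Real.sqrt (b / a')) / Real.sqrt (a' * b)) a) +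
        b * deriv (fun b' => Real.arctan (Real.sqrt (b' / a)) / Real.sqrt (a * b')) b
      = 1 / (a + b)) := by
  rw [X1_deriv_a ha hb, X1_deriv_b ha hb]
  have e1 : Real.sqrt (b / a) = Real.sqrt b / Real.sqrt a := Real.sqrt_div hb.le a
  have e2 : Real.sqrt (a * b) = Real.sqrt a * Real.sqrt b := Real.sqrt_mul ha.le b
  rw [e1, e2]
  have hsa : (0:ℝ) < Real.sqrt a := Real.sqrt_pos.mpr ha
  have hsb : (0:ℝ) < Real.sqrt b := Real.sqrt_pos.mpr hb
  have hab : (0:ℝ) < a + b := by positivity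
  constructor <;> (field_simp; ring)
end
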